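/- Fix positive integers m₁, m₂, a point (p,q) with 1 ≤ p ≤ m₁ and 1 ≤ q ≤ m₂, and natural numbers r, s, t. Then every walk starting at (p,q) whose steps are some ordering of the multiset consisting of r steps (1,0), s steps (0,1) and t steps (−1,−1) has all of its points (including the endpoint) inside the rectangle {1,…,m₁} × {1,…,m₂} if and only if r ≤ m₁ − p, s ≤ m₂ − q and t ≤ min(p,q) − 1. -/

import Mathlib

lemma sum_of_steps (M : List (ℤ × ℤ))
    (h : ∀ x ∈ M, x = ((1:ℤ),(0:ℤ)) ∨ x = ((0:ℤ),(1:ℤ)) ∨ x = ((-1:ℤ),(-1:ℤ))) :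
    M.sum = ((Multiset.count ((1:ℤ),(0:ℤ)) ↑M : ℤ) - (Multiset.count ((-1:ℤ),(-1:ℤ)) ↑M : ℤ),
             (Multiset.count ((0:ℤ),(1:ℤ)) ↑M : ℤ) - (Multiset.count ((-1:ℤ),(-1:ℤ)) ↑M : ℤ)) := by
  induction M with
  | nil => simp [Prod.ext_iff]
  | cons a M ih =>
    have ha := h a (by simp)
    have ih' := ih (fun x hx => h x (by simp [hx]))
    rcases ha with h1 | h1 | h1 <;> subst h1 <;>
        rw [List.sum_cons, ih'] <;>
        simp only [← Multiset.cons_coe, Multiset.count_cons] <;>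
        norm_num [Prod.ext_iff]
    · ring
    · ring
    · constructor <;> ring

lemma coe_three_replicate (a b c : ℕ) (x y z : ℤ × ℤ) :
    ((List.replicate a x ++ List.replicate b y ++ List.replicate c z : List (ℤ × ℤ)) :
        Multiset (ℤ × ℤ)) =
      Multiset.replicate a x + Multiset.replicate b y + Multiset.replicate c z := by
  simp only [← Multiset.coe_add, Multiset.coe_replicate]

theorem walks_stay_in_rectangle_iff
    (m₁ m₂ p q : ℤ) (hm₁ : 0 < m₁) (hm₂ : 0 < m₂)
    (hp1 : 1 ≤ p) (hpm : p ≤ m₁) (hq1 : 1 ≤ q) (hqm : q ≤ m₂) (r s t : ℕ) :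
    (∀ L : List (ℤ × ℤ),
        (L : Multiset (ℤ × ℤ)) =
          Multiset.replicate r ((1 : ℤ), (0 : ℤ)) +
            Multiset.replicate s ((0 : ℤ), (1 : ℤ)) +
            Multiset.replicate t ((-1 : ℤ), (-1 : ℤ)) →
        ∀ M : List (ℤ × ℤ), M <+: L →
          (1 ≤ ((p, q) + M.sum : ℤ × ℤ).1 ∧ ((p, q) + M.sum : ℤ × ℤ).1 ≤ m₁) ∧
          (1 ≤ ((p, q) + M.sum : ℤ × ℤ).2 ∧ ((p, q) + M.sum : ℤ × ℤ).2 ≤ m₂)) ↔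
      ((r : ℤ) ≤ m₁ - p ∧ (s : ℤ) ≤ m₂ - q ∧ (t : ℤ) ≤ min p q - 1) := by
  constructor
  · intro h
    refine ⟨?_, ?_, ?_⟩
    · have := h (List.replicate r ((1:ℤ),(0:ℤ)) ++ List.replicate s ((0:ℤ),(1:ℤ))
          ++ List.replicate t ((-1:ℤ),(-1:ℤ)))
        (coe_three_replicate r s t _ _ _) (List.replicate r ((1:ℤ),(0:ℤ)))
        ((List.prefix_append _ _).trans (List.prefix_append _ _))
      simp [List.sum_replicate, Prod.ext_iff] at this
      omega
    · have := h (List.replicate s ((0:ℤ),(1:ℤ)) ++ List.replicate r ((1:ℤ),(0:ℤ))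
          ++ List.replicate t ((-1:ℤ),(-1:ℤ)))
        (by rw [coe_three_replicate]; abel) (List.replicate s ((0:ℤ),(1:ℤ)))
        ((List.prefix_append _ _).trans (List.prefix_append _ _))
      simp [List.sum_replicate, Prod.ext_iff] at this
      omega
    · have := h (List.replicate t ((-1:ℤ),(-1:ℤ)) ++ List.replicate r ((1:ℤ),(0:ℤ))
          ++ List.replicate s ((0:ℤ),(1:ℤ)))
        (by rw [coe_three_replicate]; abel) (List.replicate t ((-1:ℤ),(-1:ℤ)))
        ((List.prefix_append _ _).trans (List.prefix_append _ _))
      simp [List.sum_replicate, Prod.ext_iff] at this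
      omega
  · rintro ⟨hr, hs, ht⟩ L hL M hM
    have hle : (M : Multiset (ℤ × ℤ)) ≤ (L : Multiset (ℤ × ℤ)) :=
      Multiset.coe_le.mpr hM.sublist.subperm
    have hmem : ∀ x ∈ M, x = ((1:ℤ),(0:ℤ)) ∨ x = ((0:ℤ),(1:ℤ)) ∨ x = ((-1:ℤ),(-1:ℤ)) := by
      intro x hx
      have : x ∈ (L : Multiset (ℤ × ℤ)) := by
        simpa using hM.sublist.subset hx
      rw [hL] at this
      simp only [Multiset.mem_add, Multiset.mem_replicate] at this
      tauto
    have hcount : ∀ x : ℤ × ℤ, Multiset.count x ↑M ≤ Multiset.count x ↑L :=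
      fun x => Multiset.count_le_of_le x hle
    have h1 := hcount ((1:ℤ),(0:ℤ))
    have h2 := hcount ((0:ℤ),(1:ℤ))
    have h3 := hcount ((-1:ℤ),(-1:ℤ))
    rw [hL] at h1 h2 h3
    simp [Multiset.count_replicate, Prod.ext_iff] at h1 h2 h3
    rw [sum_of_steps M hmem]
    simp only [Prod.fst_add, Prod.snd_add, Multiset.coe_count]
    omega
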